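/- Let p = 1, q > 0, w ≥ 1, C₁, C₂ > 0 with C₁/w < 1 and q > C₁, and suppose a nonnegative sequence {A(t)} satisfies A(t+1) ≤ (1 - C₁/(t+w)) A(t) + C₂/(t+w)^{1+q} for all t ≥ 0. Then for all t ≥ 0, A(t) ≤ (w/(t+w))^{C₁} A(0) + (w^{C₁-q}/(q-C₁))·QC₂/(t+w)^{C₁}, where Q = ((w+1)/w)^{1+q}. -/

import Mathlib

open Real Finset

private lemma aux_ratio_rpow {s c : ℝ} (hs : 0 < s) (hc : 0 ≤ c) :
    1 - c / s ≤ (s / (s + 1)) ^ c := by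
  have hs1 : (0:ℝ) < s + 1 := by linarith
  have hbase : 0 < s / (s + 1) := div_pos hs hs1
  have hlog : Real.log ((s+1)/s) ≤ 1 / s := by
    have h := Real.log_le_sub_one_of_pos (show (0:ℝ) < (s+1)/s from div_pos hs1 hs)
    have h1 : (s+1)/s - 1 = 1/s := by field_simp; ring
    linarith
  have hlog2 : -(1/s) ≤ Real.log (s/(s+1)) := by
    rw [Real.log_div (ne_of_gt hs) (ne_of_gt hs1)]
    rw [Real.log_div (ne_of_gt hs1) (ne_of_gt hs)] at hlog
    linarith
  calc 1 - c / s ≤ Real.exp (-(c/s)) := by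
        have := Real.add_one_le_exp (-(c/s)); linarith
    _ ≤ Real.exp (Real.log (s/(s+1)) * c) := by
        apply Real.exp_le_exp.2
        have := mul_le_mul_of_nonneg_right hlog2 hc
        calc -(c/s) = -(1/s) * c := by ring
          _ ≤ _ := this
    _ = (s/(s+1)) ^ c := (Real.rpow_def_of_pos hbase c).symm

private lemma aux_tel {a c : ℝ} (ha : 0 < a) (hc : 0 < c) :
    c * (a+1) ^ (-(c+1)) ≤ a ^ (-c) - (a+1) ^ (-c) := by
  have hb : (0:ℝ) < a + 1 := by linarith
  have hba : (0:ℝ) < (a+1)/a := div_pos hb ha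
  -- (b/a)^c ≥ 1 + c/b
  have hlog : 1/(a+1) ≤ Real.log ((a+1)/a) := by
    have h := Real.log_le_sub_one_of_pos (show (0:ℝ) < a/(a+1) from div_pos ha hb)
    have h1 : a/(a+1) - 1 = -(1/(a+1)) := by field_simp; ring
    have h2 : Real.log (a/(a+1)) = - Real.log ((a+1)/a) := by
      rw [Real.log_div (ne_of_gt ha) (ne_of_gt hb), Real.log_div (ne_of_gt hb) (ne_of_gt ha)]
      ring
    rw [h2, h1] at h
    linarith
  have hkey : 1 + c/(a+1) ≤ ((a+1)/a) ^ c := by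
    calc 1 + c/(a+1) ≤ Real.exp (c/(a+1)) := by
          have := Real.add_one_le_exp (c/(a+1)); linarith
      _ ≤ Real.exp (Real.log ((a+1)/a) * c) := by
          apply Real.exp_le_exp.2
          have := mul_le_mul_of_nonneg_right hlog (le_of_lt hc)
          calc c/(a+1) = 1/(a+1) * c := by ring
            _ ≤ _ := this
      _ = ((a+1)/a) ^ c := (Real.rpow_def_of_pos hba c).symm
  -- multiply by (a+1)^(-c)
  have hbc : (0:ℝ) < (a+1) ^ (-c) := Real.rpow_pos_of_pos hb _
  have h1 : (a+1) ^ (-(c+1)) = (a+1) ^ (-c) * (a+1)⁻¹ := by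
    rw [show -(c+1) = -c + (-1) by ring, Real.rpow_add hb, Real.rpow_neg_one]
  have h2 : a ^ (-c) = (a+1) ^ (-c) * ((a+1)/a) ^ c := by
    rw [Real.div_rpow (le_of_lt hb) (le_of_lt ha), Real.rpow_neg (le_of_lt ha),
      Real.rpow_neg (le_of_lt hb)]
    field_simp
  rw [h1, h2]
  have := mul_le_mul_of_nonneg_left hkey (le_of_lt hbc)
  have hinv : (a+1)⁻¹ = 1/(a+1) := by ring
  calc c * ((a+1) ^ (-c) * (a+1)⁻¹)
      = (a+1) ^ (-c) * (1 + c/(a+1)) - (a+1) ^ (-c) := by rw [hinv]; ring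
    _ ≤ (a+1) ^ (-c) * ((a+1)/a) ^ c - (a+1) ^ (-c) := by linarith
    _ = (a+1) ^ (-c) * ((a+1)/a) ^ c - (a+1) ^ (-c) := rfl

theorem sequential_estimate_p_one_q_gt
    (q w C₁ C₂ : ℝ) (hq : 0 < q) (hw : 1 ≤ w)
    (hC₁ : 0 < C₁) (hC₂ : 0 < C₂)
    (hstep : C₁ / w < 1) (hqC : C₁ < q)
    (A : ℕ → ℝ) (hA : ∀ t, 0 ≤ A t)
    (hrec : ∀ t : ℕ, A (t + 1) ≤
      (1 - C₁ / ((t : ℝ) + w)) * A t + C₂ / ((t : ℝ) + w) ^ (1 + q)) :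
    ∀ t : ℕ,
      A t ≤ (w / ((t : ℝ) + w)) ^ C₁ * A 0
          + w ^ (C₁ - q) / (q - C₁) *
              (((w + 1) / w) ^ (1 + q) * C₂) / ((t : ℝ) + w) ^ C₁ := by
  have hw0 : (0:ℝ) < w := by linarith
  set Q : ℝ := ((w + 1) / w) ^ (1 + q) with hQdef
  have hQpos : 0 < Q := Real.rpow_pos_of_pos (div_pos (by linarith) hw0) _
  set S : ℕ → ℝ := fun t => ∑ k ∈ Finset.range t, ((k:ℝ) + 1 + w) ^ (C₁ - 1 - q) with hSdef
  have hSnonneg : ∀ t, 0 ≤ S t := by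
    intro t
    apply Finset.sum_nonneg
    intro k _
    exact le_of_lt (Real.rpow_pos_of_pos (by positivity) _)
  -- the main invariant
  have key : ∀ t : ℕ, A t ≤ (w / ((t : ℝ) + w)) ^ C₁ * A 0
      + Q * C₂ * S t / ((t : ℝ) + w) ^ C₁ := by
    intro t
    induction t with
    | zero =>
      simp only [Nat.cast_zero, zero_add, hSdef, Finset.range_zero, Finset.sum_empty,
        mul_zero, zero_div, add_zero, div_self (ne_of_gt hw0), Real.one_rpow, one_mul]
      exact le_refl _
    | succ n ih =>
      set s : ℝ := (n:ℝ) + w with hsdef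
      have hs : 0 < s := by positivity
      have hs1 : (0:ℝ) < s + 1 := by linarith
      have hws : w ≤ s := by
        rw [hsdef]
        have : (0:ℝ) ≤ (n:ℝ) := Nat.cast_nonneg n
        linarith
      have hfac : 0 ≤ 1 - C₁ / s := by
        have : C₁ / s ≤ C₁ / w := div_le_div_of_nonneg_left (le_of_lt hC₁) hw0 hws
        linarith
      have hcast : ((n + 1 : ℕ) : ℝ) + w = s + 1 := by push_cast [hsdef]; ring
      have hratio : 1 - C₁ / s ≤ (s / (s + 1)) ^ C₁ := aux_ratio_rpow hs (le_of_lt hC₁)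
      have step1 : A (n+1) ≤ (1 - C₁/s) * ((w/s) ^ C₁ * A 0 + Q * C₂ * S n / s ^ C₁)
          + C₂ / s ^ (1+q) := by
        have h := hrec n
        have := mul_le_mul_of_nonneg_left ih hfac
        linarith
      -- (i)
      have hi : (1 - C₁/s) * ((w/s) ^ C₁) ≤ (w/(s+1)) ^ C₁ := by
        have heq : (w/(s+1)) ^ C₁ = (w/s) ^ C₁ * (s/(s+1)) ^ C₁ := by
          rw [← Real.mul_rpow (by positivity) (by positivity)]
          congr 1
          field_simp
        rw [heq]
        have hwsnn : (0:ℝ) ≤ (w/s) ^ C₁ := le_of_lt (Real.rpow_pos_of_pos (div_pos hw0 hs) _)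
        calc (1 - C₁/s) * ((w/s) ^ C₁) = (w/s) ^ C₁ * (1 - C₁/s) := by ring
          _ ≤ (w/s) ^ C₁ * (s/(s+1)) ^ C₁ := mul_le_mul_of_nonneg_left hratio hwsnn
      -- (ii)
      have hii : (1 - C₁/s) / s ^ C₁ ≤ 1 / (s+1) ^ C₁ := by
        have hsC : (0:ℝ) < s ^ C₁ := Real.rpow_pos_of_pos hs _
        have hs1C : (0:ℝ) < (s+1) ^ C₁ := Real.rpow_pos_of_pos hs1 _
        have heq : (1:ℝ) / (s+1) ^ C₁ = (s/(s+1)) ^ C₁ / s ^ C₁ := by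
          rw [Real.div_rpow (le_of_lt hs) (le_of_lt hs1)]
          field_simp
        rw [heq]
        gcongr
      -- (iii)
      have hiii : C₂ / s ^ (1+q) ≤ Q * C₂ / (s+1) ^ (1+q) := by
        have hq1 : (0:ℝ) ≤ 1 + q := by linarith
        have hrle : (s+1)/s ≤ (w+1)/w := by
          rw [div_le_div_iff₀ hs hw0]
          nlinarith
        have hQ' : ((s+1)/s) ^ (1+q) ≤ Q := by
          rw [hQdef]
          exact Real.rpow_le_rpow (by positivity) hrle hq1
        have hsp : (0:ℝ) < s ^ (1+q) := Real.rpow_pos_of_pos hs _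
        have hs1p : (0:ℝ) < (s+1) ^ (1+q) := Real.rpow_pos_of_pos hs1 _
        have hkey : (s+1) ^ (1+q) ≤ Q * s ^ (1+q) := by
          have heq : ((s+1)/s) ^ (1+q) = (s+1) ^ (1+q) / s ^ (1+q) :=
            Real.div_rpow (le_of_lt hs1) (le_of_lt hs) _
          rw [heq, div_le_iff₀ hsp] at hQ'
          linarith
        rw [div_le_div_iff₀ hsp hs1p]
        calc C₂ * (s+1) ^ (1+q) ≤ C₂ * (Q * s ^ (1+q)) :=
              mul_le_mul_of_nonneg_left hkey (le_of_lt hC₂)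
          _ = Q * C₂ * s ^ (1+q) := by ring
      -- new term
      have hterm : Q * C₂ / (s+1) ^ (1+q)
          = Q * C₂ * ((s+1) ^ (C₁-1-q)) / (s+1) ^ C₁ := by
        rw [show C₁ - 1 - q = C₁ - (1+q) by ring, Real.rpow_sub hs1]
        field_simp
      have hSsucc : S (n+1) = S n + ((n:ℝ) + 1 + w) ^ (C₁-1-q) := by
        simp [hSdef, Finset.sum_range_succ]
      have hSn1 : ((n:ℝ) + 1 + w) = s + 1 := by rw [hsdef]; ring
      rw [hcast, hSsucc, hSn1]
      have hQCS : 0 ≤ Q * C₂ * S n := by positivity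
      calc A (n+1) ≤ (1 - C₁/s) * ((w/s) ^ C₁ * A 0 + Q * C₂ * S n / s ^ C₁)
            + C₂ / s ^ (1+q) := step1
        _ = (1 - C₁/s) * (w/s) ^ C₁ * A 0 + Q * C₂ * S n * ((1 - C₁/s) / s ^ C₁)
            + C₂ / s ^ (1+q) := by ring
        _ ≤ (w/(s+1)) ^ C₁ * A 0 + Q * C₂ * S n * (1 / (s+1) ^ C₁)
            + Q * C₂ / (s+1) ^ (1+q) := by
            have t1 := mul_le_mul_of_nonneg_right hi (hA 0)
            have t2 := mul_le_mul_of_nonneg_left hii hQCS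
            linarith
        _ = (w/(s+1)) ^ C₁ * A 0 + (Q * C₂ * (S n + (s+1) ^ (C₁-1-q))) / (s+1) ^ C₁ := by
            rw [hterm]; ring
  -- bound on S
  have hSbound : ∀ t : ℕ, S t ≤ w ^ (C₁ - q) / (q - C₁) := by
    intro t
    set c : ℝ := q - C₁ with hcdef
    have hc : 0 < c := by simp [hcdef]; linarith
    have htel : ∀ k : ℕ, c * (((k:ℝ) + 1 + w) ^ (C₁ - 1 - q))
        ≤ ((k:ℝ) + w) ^ (-c) - ((k:ℝ) + 1 + w) ^ (-c) := by
      intro k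
      have ha : (0:ℝ) < (k:ℝ) + w := by positivity
      have h := aux_tel ha hc
      have e1 : ((k:ℝ) + w + 1) = (k:ℝ) + 1 + w := by ring
      have e2 : (-(c+1)) = C₁ - 1 - q := by rw [hcdef]; ring
      rw [e1, e2] at h
      exact h
    have hsum : c * S t ≤ w ^ (-c) := by
      have h1 : c * S t = ∑ k ∈ Finset.range t, c * (((k:ℝ) + 1 + w) ^ (C₁ - 1 - q)) := by
        rw [hSdef, Finset.mul_sum]
      have h2 : ∑ k ∈ Finset.range t, c * (((k:ℝ) + 1 + w) ^ (C₁ - 1 - q))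
          ≤ ∑ k ∈ Finset.range t, (((k:ℝ) + w) ^ (-c) - ((k:ℝ) + 1 + w) ^ (-c)) :=
        Finset.sum_le_sum (fun k _ => htel k)
      have h3 : ∑ k ∈ Finset.range t, (((k:ℝ) + w) ^ (-c) - ((k:ℝ) + 1 + w) ^ (-c))
          = ((0:ℝ) + w) ^ (-c) - ((t:ℝ) + w) ^ (-c) := by
        have := Finset.sum_range_sub' (fun k : ℕ => ((k:ℝ) + w) ^ (-c)) t
        simp only [Nat.cast_zero] at this
        rw [← this]
        apply Finset.sum_congr rfl
        intro k _
        push_cast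
        ring_nf
      have h4 : ((0:ℝ) + w) ^ (-c) - ((t:ℝ) + w) ^ (-c) ≤ w ^ (-c) := by
        have : (0:ℝ) < ((t:ℝ) + w) ^ (-c) := Real.rpow_pos_of_pos (by positivity) _
        rw [zero_add]
        linarith
      linarith
    have hwneg : w ^ (-c) = w ^ (C₁ - q) := by
      congr 1
      rw [hcdef]; ring
    calc S t = (c * S t) / c := by field_simp
      _ ≤ w ^ (-c) / c := by gcongr
      _ = w ^ (C₁ - q) / (q - C₁) := by rw [hwneg, hcdef]
  -- finish
  intro t
  have hk := key t
  have hS := hSbound t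
  have hpos : (0:ℝ) < ((t:ℝ) + w) ^ C₁ := Real.rpow_pos_of_pos (by positivity) _
  have hmono : Q * C₂ * S t / ((t:ℝ) + w) ^ C₁
      ≤ w ^ (C₁ - q) / (q - C₁) * (Q * C₂) / ((t:ℝ) + w) ^ C₁ := by
    have hnum : Q * C₂ * S t ≤ w ^ (C₁ - q) / (q - C₁) * (Q * C₂) := by
      calc Q * C₂ * S t ≤ Q * C₂ * (w ^ (C₁ - q) / (q - C₁)) :=
            mul_le_mul_of_nonneg_left hS (by positivity)
        _ = w ^ (C₁ - q) / (q - C₁) * (Q * C₂) := by ring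
    gcongr
  linarith
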